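/- arXiv:2502.06277 — 3 statements merged into one kernel-verified Lean document; each statement's English description precedes it below -/
import Mathlib

section
/- Let G₁ and G₂ be finite simple graphs of orders n₁, n₂ and sizes m₁, m₂, with maximum degrees Δ₁, Δ₂. Then the elliptic Sombor index of the join satisfies ESO(G₁+G₂) ≤ 2√2·m₁·(Δ₁+n₂)² + 2√2·m₂·(Δ₂+n₁)² + n₁n₂·(Δ₁+n₂+Δ₂+n₁)·√((Δ₁+n₂)² + (Δ₂+n₁)²). -/
open Finset SimpleGraph
open scoped Classical

noncomputable def ESO {V : Type*} [Fintype V] (G : SimpleGraph V) : Real :=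
  Finset.sum G.edgeSet.toFinset fun e =>
    Sym2.lift ⟨fun u v => ((G.degree u : Real) + (G.degree v : Real)) *
        Real.sqrt ((G.degree u : Real) ^ 2 + (G.degree v : Real) ^ 2),
      fun u v => by
        dsimp only; rw [add_comm (G.degree u : Real), add_comm ((G.degree u : Real) ^ 2)]⟩ e

noncomputable def EU {V : Type*} [Fintype V] (G : SimpleGraph V) : Real :=
  Finset.sum G.edgeSet.toFinset fun e =>
    Sym2.lift ⟨fun u v => Real.sqrt ((G.degree u : Real) ^ 2 + (G.degree v : Real) ^ 2 +
        (G.degree u : Real) * (G.degree v : Real)),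
      fun u v => by
        dsimp only; rw [mul_comm (G.degree u : Real), add_comm ((G.degree u : Real) ^ 2)]⟩ e

noncomputable def edgeCount {V : Type*} [Fintype V] (G : SimpleGraph V) : Nat :=
  G.edgeSet.toFinset.card

def graphJoin {V1 V2 : Type*} (G1 : SimpleGraph V1) (G2 : SimpleGraph V2) :
    SimpleGraph (V1 ⊕ V2) where
  Adj x y :=
    match x, y with
    | Sum.inl a, Sum.inl b => G1.Adj a b
    | Sum.inr a, Sum.inr b => G2.Adj a b
    | Sum.inl _, Sum.inr _ => True
    | Sum.inr _, Sum.inl _ => True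
  symm := by
    constructor
    rintro (a | a) (b | b) h
    · exact G1.adj_symm h
    · trivial
    · trivial
    · exact G2.adj_symm h
  loopless := by
    constructor
    rintro (a | a) h
    · exact G1.irrefl h
    · exact G2.irrefl h

/-! ### Auxiliary lemmas -/

lemma eso_key_real {x y A B : ℝ} (hx0 : 0 ≤ x) (hy0 : 0 ≤ y) (hA : x ≤ A) (hB : y ≤ B) :
    (x + y) * Real.sqrt (x ^ 2 + y ^ 2) ≤ (A + B) * Real.sqrt (A ^ 2 + B ^ 2) := by
  apply mul_le_mul (by linarith) (Real.sqrt_le_sqrt (by nlinarith)) (Real.sqrt_nonneg _)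
    (by linarith)

lemma eso_diag_real {A : ℝ} (hA : 0 ≤ A) :
    (A + A) * Real.sqrt (A ^ 2 + A ^ 2) = 2 * Real.sqrt 2 * A ^ 2 := by
  have h : A ^ 2 + A ^ 2 = 2 * A ^ 2 := by ring
  rw [h, Real.sqrt_mul (by norm_num), Real.sqrt_sq hA]
  ring

section Join

variable {V1 V2 : Type*} [Fintype V1] [Fintype V2] (G1 : SimpleGraph V1) (G2 : SimpleGraph V2)

lemma degree_join_inl (a : V1) :
    (graphJoin G1 G2).degree (Sum.inl a) = G1.degree a + Fintype.card V2 := by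
  have h : (graphJoin G1 G2).neighborFinset (Sum.inl a) =
      (G1.neighborFinset a).map ⟨Sum.inl, Sum.inl_injective⟩ ∪
      (Finset.univ : Finset V2).map ⟨Sum.inr, Sum.inr_injective⟩ := by
    ext x
    cases x with
    | inl b => rw [mem_neighborFinset]; simp [graphJoin]
    | inr b => rw [mem_neighborFinset]; simp [graphJoin]
  rw [SimpleGraph.degree, h,
    Finset.card_union_of_disjoint (by simp [Finset.disjoint_left]),
    Finset.card_map, Finset.card_map, Finset.card_univ]
  rfl

lemma degree_join_inr (a : V2) :
    (graphJoin G1 G2).degree (Sum.inr a) = G2.degree a + Fintype.card V1 := by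
  have h : (graphJoin G1 G2).neighborFinset (Sum.inr a) =
      (G2.neighborFinset a).map ⟨Sum.inr, Sum.inr_injective⟩ ∪
      (Finset.univ : Finset V1).map ⟨Sum.inl, Sum.inl_injective⟩ := by
    ext x
    cases x with
    | inl b => rw [mem_neighborFinset]; simp [graphJoin]
    | inr b => rw [mem_neighborFinset]; simp [graphJoin]
  rw [SimpleGraph.degree, h,
    Finset.card_union_of_disjoint (by simp [Finset.disjoint_left]),
    Finset.card_map, Finset.card_map, Finset.card_univ]
  rfl

noncomputable def emb1 : Sym2 V1 ↪ Sym2 (V1 ⊕ V2) :=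
  ⟨Sym2.map Sum.inl, Sym2.map.injective Sum.inl_injective⟩

noncomputable def emb2 : Sym2 V2 ↪ Sym2 (V1 ⊕ V2) :=
  ⟨Sym2.map Sum.inr, Sym2.map.injective Sum.inr_injective⟩

noncomputable def embc : V1 × V2 ↪ Sym2 (V1 ⊕ V2) :=
  ⟨fun p => s(Sum.inl p.1, Sum.inr p.2), by
    rintro ⟨a, b⟩ ⟨c, d⟩ h
    simp only [Sym2.eq_iff] at h
    rcases h with ⟨h1, h2⟩ | ⟨h1, h2⟩
    · simp_all
    · simp_all⟩

lemma edge_decomp :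
    (graphJoin G1 G2).edgeSet.toFinset =
      (G1.edgeSet.toFinset.map (emb1 (V2 := V2))) ∪
      (G2.edgeSet.toFinset.map (emb2 (V1 := V1))) ∪
      ((Finset.univ : Finset (V1 × V2)).map embc) := by
  ext e
  induction e with
  | _ x y =>
    cases x with
    | inl a =>
      cases y with
      | inl b =>
        simp only [Set.mem_toFinset, mem_edgeSet, Finset.mem_union, Finset.mem_map, emb1, emb2,
          embc, Function.Embedding.coeFn_mk]
        constructor
        · intro h
          exact Or.inl (Or.inl ⟨s(a, b), by have h' : G1.Adj a b := h; simpa using h', rfl⟩)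
        · rintro ((⟨e', he', heq⟩ | ⟨e', he', heq⟩) | ⟨⟨p, q⟩, _, heq⟩)
          · induction e' with
            | _ u v =>
              simp only [Sym2.map_pair_eq, Sym2.eq_iff, Sum.inl.injEq] at heq
              rcases heq with ⟨h1, h2⟩ | ⟨h1, h2⟩ <;> subst h1 <;> subst h2 <;>
                simp_all [mem_edgeSet, graphJoin, adj_symm]
          · induction e' with
            | _ u v => simp [Sym2.map_pair_eq, Sym2.eq_iff] at heq
          · change s(Sum.inl p, Sum.inr q) = _ at heq
            simp [Sym2.eq_iff] at heq
      | inr b =>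
        simp only [Set.mem_toFinset, mem_edgeSet, Finset.mem_union, Finset.mem_map, emb1, emb2,
          embc, Function.Embedding.coeFn_mk]
        constructor
        · intro _
          exact Or.inr ⟨(a, b), Finset.mem_univ _, rfl⟩
        · intro _
          trivial
    | inr a =>
      cases y with
      | inl b =>
        simp only [Set.mem_toFinset, mem_edgeSet, Finset.mem_union, Finset.mem_map, emb1, emb2,
          embc, Function.Embedding.coeFn_mk]
        constructor
        · intro _
          exact Or.inr ⟨(b, a), Finset.mem_univ _, Sym2.eq_swap⟩
        · intro _
          trivial
      | inr b =>
        simp only [Set.mem_toFinset, mem_edgeSet, Finset.mem_union, Finset.mem_map, emb1, emb2,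
          embc, Function.Embedding.coeFn_mk]
        constructor
        · intro h
          exact Or.inl (Or.inr ⟨s(a, b), by have h' : G2.Adj a b := h; simpa using h', rfl⟩)
        · rintro ((⟨e', he', heq⟩ | ⟨e', he', heq⟩) | ⟨⟨p, q⟩, _, heq⟩)
          · induction e' with
            | _ u v => simp [Sym2.map_pair_eq, Sym2.eq_iff] at heq
          · induction e' with
            | _ u v =>
              simp only [Sym2.map_pair_eq, Sym2.eq_iff, Sum.inr.injEq] at heq
              rcases heq with ⟨h1, h2⟩ | ⟨h1, h2⟩ <;> subst h1 <;> subst h2 <;>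
                simp_all [mem_edgeSet, graphJoin, adj_symm]
          · change s(Sum.inl p, Sum.inr q) = _ at heq
            simp [Sym2.eq_iff] at heq

lemma disj12 : Disjoint (G1.edgeSet.toFinset.map (emb1 (V2 := V2)))
    (G2.edgeSet.toFinset.map (emb2 (V1 := V1))) := by
  rw [Finset.disjoint_left]
  rintro e he1 he2
  rw [Finset.mem_map] at he1 he2
  obtain ⟨e1, _, h1⟩ := he1
  obtain ⟨e2, _, h2⟩ := he2
  induction e1 with
  | _ u v =>
    induction e2 with
    | _ p q =>
      rw [← h2] at h1
      simp [emb1, emb2, Sym2.map_pair_eq, Sym2.eq_iff] at h1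

lemma disjc : Disjoint
    ((G1.edgeSet.toFinset.map (emb1 (V2 := V2))) ∪ (G2.edgeSet.toFinset.map (emb2 (V1 := V1))))
    ((Finset.univ : Finset (V1 × V2)).map embc) := by
  rw [Finset.disjoint_left]
  rintro e he1 he2
  rw [Finset.mem_map] at he2
  obtain ⟨⟨p, q⟩, _, h2⟩ := he2
  rw [Finset.mem_union] at he1
  rcases he1 with he1 | he1 <;> rw [Finset.mem_map] at he1 <;> obtain ⟨e1, _, h1⟩ := he1 <;>
    induction e1 with
  | _ u v =>
    rw [← h2] at h1
    change _ = s(Sum.inl p, Sum.inr q) at h1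
    simp [emb1, emb2, embc, Sym2.map_pair_eq, Sym2.eq_iff] at h1

end Join

theorem eso_join_upper {V1 V2 : Type*} [Fintype V1] [Fintype V2]
    (G1 : SimpleGraph V1) (G2 : SimpleGraph V2) :
    ESO (graphJoin G1 G2) ≤
      2 * Real.sqrt 2 * (edgeCount G1 : Real) * ((G1.maxDegree : Real) + Fintype.card V2) ^ 2 +
      2 * Real.sqrt 2 * (edgeCount G2 : Real) * ((G2.maxDegree : Real) + Fintype.card V1) ^ 2 +
      (Fintype.card V1 : Real) * (Fintype.card V2 : Real) *
        ((G1.maxDegree : Real) + Fintype.card V2 + (G2.maxDegree : Real) + Fintype.card V1) *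
        Real.sqrt (((G1.maxDegree : Real) + Fintype.card V2) ^ 2 +
          ((G2.maxDegree : Real) + Fintype.card V1) ^ 2) := by
  classical
  set J := graphJoin G1 G2 with hJ
  set A : ℝ := (G1.maxDegree : ℝ) + Fintype.card V2 with hA
  set B : ℝ := (G2.maxDegree : ℝ) + Fintype.card V1 with hB
  have hA0 : 0 ≤ A := by positivity
  have hB0 : 0 ≤ B := by positivity
  -- degree bounds
  have hdl : ∀ a : V1, ((J.degree (Sum.inl a) : ℝ)) ≤ A := by
    intro a
    rw [degree_join_inl]
    push_cast
    have := G1.degree_le_maxDegree a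
    have : (G1.degree a : ℝ) ≤ G1.maxDegree := by exact_mod_cast this
    linarith
  have hdr : ∀ a : V2, ((J.degree (Sum.inr a) : ℝ)) ≤ B := by
    intro a
    rw [degree_join_inr]
    push_cast
    have := G2.degree_le_maxDegree a
    have : (G2.degree a : ℝ) ≤ G2.maxDegree := by exact_mod_cast this
    linarith
  rw [ESO, edge_decomp, Finset.sum_union (disjc G1 G2),
    Finset.sum_union (disj12 G1 G2), Finset.sum_map, Finset.sum_map, Finset.sum_map]
  refine (add_le_add (add_le_add
      (Finset.sum_le_card_nsmul _ _ (2 * Real.sqrt 2 * A ^ 2) ?_)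
      (Finset.sum_le_card_nsmul _ _ (2 * Real.sqrt 2 * B ^ 2) ?_))
      (Finset.sum_le_card_nsmul _ _ ((A + B) * Real.sqrt (A ^ 2 + B ^ 2)) ?_)).trans ?_
  · intro e _
    induction e with
    | _ u v =>
      show Sym2.lift _ (emb1 s(u, v)) ≤ _
      simp only [emb1, Function.Embedding.coeFn_mk, Sym2.map_pair_eq, Sym2.lift_mk]
      rw [← eso_diag_real hA0]
      exact eso_key_real (Nat.cast_nonneg _) (Nat.cast_nonneg _) (hdl u) (hdl v)
  · intro e _
    induction e with
    | _ u v =>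
      show Sym2.lift _ (emb2 s(u, v)) ≤ _
      simp only [emb2, Function.Embedding.coeFn_mk, Sym2.map_pair_eq, Sym2.lift_mk]
      rw [← eso_diag_real hB0]
      exact eso_key_real (Nat.cast_nonneg _) (Nat.cast_nonneg _) (hdr u) (hdr v)
  · rintro ⟨a, b⟩ _
    show Sym2.lift _ (embc (a, b)) ≤ _
    simp only [embc, Function.Embedding.coeFn_mk, Sym2.lift_mk]
    exact eso_key_real (Nat.cast_nonneg _) (Nat.cast_nonneg _) (hdl a) (hdr b)
  · apply le_of_eq
    simp only [nsmul_eq_mul, Finset.card_univ, Fintype.card_prod]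
    rw [show G1.edgeSet.toFinset.card = edgeCount G1 from rfl,
      show G2.edgeSet.toFinset.card = edgeCount G2 from rfl]
    push_cast
    ring
end

section
/- Let G₁ and G₂ be finite simple graphs of orders n₁, n₂ and sizes m₁, m₂ with maximum degrees Δ₁, Δ₂. Then the elliptic Sombor index of the corona product satisfies ESO(G₁ ∘ G₂) ≤ 2√2·m₁·(Δ₁+n₂)² + 2√2·n₁·m₂·(Δ₂+1)² + n₁n₂·(Δ₁+n₂+Δ₂+1)·√((Δ₁+n₂)² + (Δ₂+1)²). -/
open Finset SimpleGraph
open scoped Classical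

def corona {V1 V2 : Type*} (G1 : SimpleGraph V1) (G2 : SimpleGraph V2) :
    SimpleGraph (V1 ⊕ V1 × V2) where
  Adj x y :=
    match x, y with
    | Sum.inl a, Sum.inl b => G1.Adj a b
    | Sum.inr p, Sum.inr q => p.1 = q.1 ∧ G2.Adj p.2 q.2
    | Sum.inl a, Sum.inr p => a = p.1
    | Sum.inr p, Sum.inl a => a = p.1
  symm := by
    constructor
    rintro (a | p) (b | q) h
    · exact G1.adj_symm h
    · exact h
    · exact h
    · exact ⟨h.1.symm, G2.adj_symm h.2⟩
  loopless := by
    constructor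
    rintro (a | p) h
    · exact G1.irrefl h
    · exact G2.irrefl h.2

noncomputable def cls {V1 V2 : Type*} : Sym2 (V1 ⊕ V1 × V2) → ℕ :=
  Sym2.lift ⟨fun u v => match u, v with
    | Sum.inl _, Sum.inl _ => 0
    | Sum.inr _, Sum.inr _ => 1
    | _, _ => 2,
    by rintro (a | p) (b | q) <;> rfl⟩

theorem degA {V1 V2 : Type*} [Fintype V1] [Fintype V2]
    (G1 : SimpleGraph V1) (G2 : SimpleGraph V2) (a : V1) :
    (corona G1 G2).degree (Sum.inl a) ≤ G1.maxDegree + Fintype.card V2 := by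
  classical
  have hsub : (corona G1 G2).neighborFinset (Sum.inl a) ⊆
      ((G1.neighborFinset a).image Sum.inl) ∪
        ((Finset.univ : Finset V2).image (fun v : V2 => Sum.inr (a, v))) := by
    intro x hx
    rw [SimpleGraph.mem_neighborFinset] at hx
    rcases x with b | p
    · have h : G1.Adj a b := hx
      exact Finset.mem_union_left _ (Finset.mem_image.2
        ⟨b, (SimpleGraph.mem_neighborFinset _ _ _).2 h, rfl⟩)
    · have h : a = p.1 := hx
      refine Finset.mem_union_right _ (Finset.mem_image.2 ⟨p.2, Finset.mem_univ _, ?_⟩)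
      obtain ⟨p1, p2⟩ := p
      cases h
      rfl
  calc (corona G1 G2).degree (Sum.inl a)
      = ((corona G1 G2).neighborFinset (Sum.inl a)).card := rfl
    _ ≤ _ := Finset.card_le_card hsub
    _ ≤ ((G1.neighborFinset a).image Sum.inl).card +
          ((Finset.univ : Finset V2).image (fun v : V2 => Sum.inr (a, v))).card :=
        Finset.card_union_le _ _
    _ ≤ (G1.neighborFinset a).card + (Finset.univ : Finset V2).card :=
        add_le_add Finset.card_image_le Finset.card_image_le
    _ = G1.degree a + Fintype.card V2 := by rw [Finset.card_univ]; rfl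
    _ ≤ G1.maxDegree + Fintype.card V2 :=
        Nat.add_le_add_right (G1.degree_le_maxDegree a) _

theorem degB {V1 V2 : Type*} [Fintype V1] [Fintype V2]
    (G1 : SimpleGraph V1) (G2 : SimpleGraph V2) (p : V1 × V2) :
    (corona G1 G2).degree (Sum.inr p) ≤ G2.maxDegree + 1 := by
  classical
  have hsub : (corona G1 G2).neighborFinset (Sum.inr p) ⊆
      ((G2.neighborFinset p.2).image (fun v : V2 => Sum.inr (p.1, v))) ∪
        {Sum.inl p.1} := by
    intro x hx
    rw [SimpleGraph.mem_neighborFinset] at hx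
    rcases x with b | q
    · have h : b = p.1 := hx
      cases h
      exact Finset.mem_union_right _ (Finset.mem_singleton_self _)
    · have h : p.1 = q.1 ∧ G2.Adj p.2 q.2 := hx
      refine Finset.mem_union_left _ (Finset.mem_image.2
        ⟨q.2, (SimpleGraph.mem_neighborFinset _ _ _).2 h.2, ?_⟩)
      obtain ⟨q1, q2⟩ := q
      obtain ⟨h1, _⟩ := h
      cases h1
      rfl
  calc (corona G1 G2).degree (Sum.inr p)
      = ((corona G1 G2).neighborFinset (Sum.inr p)).card := rfl
    _ ≤ _ := Finset.card_le_card hsub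
    _ ≤ ((G2.neighborFinset p.2).image (fun v : V2 => Sum.inr (p.1, v))).card +
          ({Sum.inl p.1} : Finset (V1 ⊕ V1 × V2)).card := Finset.card_union_le _ _
    _ ≤ (G2.neighborFinset p.2).card + 1 := by
        refine add_le_add Finset.card_image_le ?_
        simp
    _ = G2.degree p.2 + 1 := rfl
    _ ≤ G2.maxDegree + 1 := Nat.add_le_add_right (G2.degree_le_maxDegree p.2) _

theorem key_ineq (x y X Y : ℝ) (hx : 0 ≤ x) (hy : 0 ≤ y) (hX : x ≤ X) (hY : y ≤ Y) :
    (x + y) * Real.sqrt (x ^ 2 + y ^ 2) ≤ (X + Y) * Real.sqrt (X ^ 2 + Y ^ 2) := by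
  have hs : Real.sqrt (x ^ 2 + y ^ 2) ≤ Real.sqrt (X ^ 2 + Y ^ 2) :=
    Real.sqrt_le_sqrt (add_le_add (pow_le_pow_left₀ hx hX 2) (pow_le_pow_left₀ hy hY 2))
  exact mul_le_mul (add_le_add hX hY) hs (Real.sqrt_nonneg _) (by linarith)

theorem sqrt_two_sq (A : ℝ) (hA : 0 ≤ A) :
    (A + A) * Real.sqrt (A ^ 2 + A ^ 2) = 2 * Real.sqrt 2 * A ^ 2 := by
  rw [← two_mul (A ^ 2), Real.sqrt_mul (by norm_num : (0:ℝ) ≤ 2), Real.sqrt_sq hA]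
  ring

set_option maxHeartbeats 1000000 in
theorem eso_corona_upper {V1 V2 : Type*} [Fintype V1] [Fintype V2]
    (G1 : SimpleGraph V1) (G2 : SimpleGraph V2) :
    ESO (corona G1 G2) ≤
      2 * Real.sqrt 2 * (edgeCount G1 : Real) * ((G1.maxDegree : Real) + Fintype.card V2) ^ 2 +
      2 * Real.sqrt 2 * (Fintype.card V1 : Real) * (edgeCount G2 : Real) *
        ((G2.maxDegree : Real) + 1) ^ 2 +
      (Fintype.card V1 : Real) * (Fintype.card V2 : Real) *
        ((G1.maxDegree : Real) + Fintype.card V2 + (G2.maxDegree : Real) + 1) *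
        Real.sqrt (((G1.maxDegree : Real) + Fintype.card V2) ^ 2 +
          ((G2.maxDegree : Real) + 1) ^ 2) := by
  classical
  set H := corona G1 G2 with hH
  set A : ℝ := (G1.maxDegree : ℝ) + Fintype.card V2 with hAdef
  set B : ℝ := (G2.maxDegree : ℝ) + 1 with hBdef
  have hA0 : 0 ≤ A := by positivity
  have hB0 : 0 ≤ B := by positivity
  have hdA : ∀ a : V1, ((H.degree (Sum.inl a) : ℝ)) ≤ A := by
    intro a
    have := degA G1 G2 a
    rw [hAdef]
    push_cast
    exact_mod_cast (by exact_mod_cast this : ((corona G1 G2).degree (Sum.inl a) : ℝ) ≤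
      ((G1.maxDegree + Fintype.card V2 : ℕ) : ℝ))
  have hdB : ∀ p : V1 × V2, ((H.degree (Sum.inr p) : ℝ)) ≤ B := by
    intro p
    have := degB G1 G2 p
    rw [hBdef]
    exact_mod_cast (by exact_mod_cast this : ((corona G1 G2).degree (Sum.inr p) : ℝ) ≤
      ((G2.maxDegree + 1 : ℕ) : ℝ))
  have hdnn : ∀ x : V1 ⊕ V1 × V2, (0:ℝ) ≤ (H.degree x : ℝ) := fun x => Nat.cast_nonneg _
  set E := H.edgeSet.toFinset with hEdef
  set F : Sym2 (V1 ⊕ V1 × V2) → ℝ := fun e =>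
    Sym2.lift ⟨fun u v => ((H.degree u : Real) + (H.degree v : Real)) *
        Real.sqrt ((H.degree u : Real) ^ 2 + (H.degree v : Real) ^ 2),
      fun u v => by
        dsimp only; rw [add_comm (H.degree u : Real), add_comm ((H.degree u : Real) ^ 2)]⟩ e
    with hFdef
  have hESO : ESO H = E.sum F := rfl
  set S0 := E.filter (fun e => cls e = 0) with hS0
  set E' := E.filter (fun e => ¬ cls e = 0) with hE'
  set S1 := E'.filter (fun e => cls e = 1) with hS1
  set S2 := E'.filter (fun e => ¬ cls e = 1) with hS2
  have hsplit : E.sum F = S0.sum F + (S1.sum F + S2.sum F) := by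
    rw [hS1, hS2, Finset.sum_filter_add_sum_filter_not, hS0, hE',
      Finset.sum_filter_add_sum_filter_not]
  -- membership facts
  have memE : ∀ u v, s(u, v) ∈ E ↔ H.Adj u v := by
    intro u v
    rw [hEdef, Set.mem_toFinset, SimpleGraph.mem_edgeSet]
  -- bound on S0
  have bound0 : ∀ e ∈ S0, F e ≤ (A + A) * Real.sqrt (A ^ 2 + A ^ 2) := by
    intro e he
    induction e using Sym2.ind with
    | _ u v =>
      rw [hS0, Finset.mem_filter] at he
      obtain ⟨heE, hc⟩ := he
      rcases u with a | p <;> rcases v with b | q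
      · exact key_ineq _ _ _ _ (hdnn _) (hdnn _) (hdA a) (hdA b)
      · exact absurd hc (by simp [cls])
      · exact absurd hc (by simp [cls])
      · exact absurd hc (by simp [cls])
  have bound1 : ∀ e ∈ S1, F e ≤ (B + B) * Real.sqrt (B ^ 2 + B ^ 2) := by
    intro e he
    induction e using Sym2.ind with
    | _ u v =>
      rw [hS1, Finset.mem_filter, hE', Finset.mem_filter] at he
      obtain ⟨⟨heE, _⟩, hc⟩ := he
      rcases u with a | p <;> rcases v with b | q
      · exact absurd hc (by simp [cls])
      · exact absurd hc (by simp [cls])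
      · exact absurd hc (by simp [cls])
      · exact key_ineq _ _ _ _ (hdnn _) (hdnn _) (hdB p) (hdB q)
  have bound2 : ∀ e ∈ S2, F e ≤ (A + B) * Real.sqrt (A ^ 2 + B ^ 2) := by
    intro e he
    induction e using Sym2.ind with
    | _ u v =>
      rw [hS2, Finset.mem_filter, hE', Finset.mem_filter] at he
      obtain ⟨⟨heE, hc0⟩, hc1⟩ := he
      rcases u with a | p <;> rcases v with b | q
      · exact absurd rfl hc0
      · exact key_ineq _ _ _ _ (hdnn _) (hdnn _) (hdA a) (hdB q)
      · have h := key_ineq _ _ _ _ (hdnn (Sum.inr p)) (hdnn (Sum.inl b)) (hdB p) (hdA b)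
        calc F s(Sum.inr p, Sum.inl b) ≤ (B + A) * Real.sqrt (B ^ 2 + A ^ 2) := h
          _ = (A + B) * Real.sqrt (A ^ 2 + B ^ 2) := by rw [add_comm B A, add_comm (B^2)]
      · exact absurd rfl hc1
  -- cardinality bounds
  have card0 : S0.card ≤ edgeCount G1 := by
    have surj : Set.SurjOn (Sym2.map Sum.inl) (↑G1.edgeSet.toFinset) (↑S0 : Set (Sym2 (V1 ⊕ V1 × V2))) := by
      intro e he
      induction e using Sym2.ind with
      | _ u v =>
        rw [Finset.mem_coe, hS0, Finset.mem_filter] at he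
        obtain ⟨heE, hc⟩ := he
        rcases u with a | p <;> rcases v with b | q
        · have hadj : G1.Adj a b := (memE _ _).1 heE
          exact ⟨s(a, b), by simpa [Set.mem_toFinset] using hadj, by
            simp [Sym2.map_pair_eq]⟩
        · exact absurd hc (by simp [cls])
        · exact absurd hc (by simp [cls])
        · exact absurd hc (by simp [cls])
    exact Finset.card_le_card_of_surjOn _ surj
  have card1 : S1.card ≤ Fintype.card V1 * edgeCount G2 := by
    have surj : Set.SurjOn
        (fun x : V1 × Sym2 V2 => Sym2.map (fun v => Sum.inr (x.1, v)) x.2)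
        (↑((Finset.univ : Finset V1) ×ˢ G2.edgeSet.toFinset)) (↑S1 : Set (Sym2 (V1 ⊕ V1 × V2))) := by
      intro e he
      induction e using Sym2.ind with
      | _ u v =>
        rw [Finset.mem_coe, hS1, Finset.mem_filter, hE', Finset.mem_filter] at he
        obtain ⟨⟨heE, _⟩, hc⟩ := he
        rcases u with a | p <;> rcases v with b | q
        · exact absurd hc (by simp [cls])
        · exact absurd hc (by simp [cls])
        · exact absurd hc (by simp [cls])
        · have hadj : p.1 = q.1 ∧ G2.Adj p.2 q.2 := (memE _ _).1 heE
          obtain ⟨p1, p2⟩ := p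
          obtain ⟨q1, q2⟩ := q
          obtain ⟨h1, h2⟩ := hadj
          cases h1
          refine ⟨(p1, s(p2, q2)), ?_, ?_⟩
          · simp [Set.mem_toFinset, h2]
          · simp [Sym2.map_pair_eq]
    calc S1.card ≤ ((Finset.univ : Finset V1) ×ˢ G2.edgeSet.toFinset).card :=
          Finset.card_le_card_of_surjOn _ surj
      _ = Fintype.card V1 * edgeCount G2 := by
          rw [Finset.card_product, Finset.card_univ]; rfl
  have card2 : S2.card ≤ Fintype.card V1 * Fintype.card V2 := by
    have surj : Set.SurjOn
        (fun p : V1 × V2 => s(Sum.inl p.1, Sum.inr p))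
        (↑(Finset.univ : Finset (V1 × V2))) (↑S2 : Set (Sym2 (V1 ⊕ V1 × V2))) := by
      intro e he
      induction e using Sym2.ind with
      | _ u v =>
        rw [Finset.mem_coe, hS2, Finset.mem_filter, hE', Finset.mem_filter] at he
        obtain ⟨⟨heE, hc0⟩, hc1⟩ := he
        rcases u with a | p <;> rcases v with b | q
        · exact absurd rfl hc0
        · have hadj : a = q.1 := (memE _ _).1 heE
          exact ⟨q, by simp, by simp [← hadj]⟩
        · have hadj : b = p.1 := (memE _ _).1 heE
          exact ⟨p, by simp, by simp [← hadj, Sym2.eq_swap]⟩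
        · exact absurd rfl hc1
    calc S2.card ≤ (Finset.univ : Finset (V1 × V2)).card :=
          Finset.card_le_card_of_surjOn _ surj
      _ = Fintype.card V1 * Fintype.card V2 := by
          rw [Finset.card_univ, Fintype.card_prod]
  -- assemble
  have c0nn : (0:ℝ) ≤ (A + A) * Real.sqrt (A ^ 2 + A ^ 2) := by positivity
  have c1nn : (0:ℝ) ≤ (B + B) * Real.sqrt (B ^ 2 + B ^ 2) := by positivity
  have c2nn : (0:ℝ) ≤ (A + B) * Real.sqrt (A ^ 2 + B ^ 2) := by positivity
  have h0 : S0.sum F ≤ (edgeCount G1 : ℝ) * ((A + A) * Real.sqrt (A ^ 2 + A ^ 2)) := by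
    calc S0.sum F ≤ S0.card • ((A + A) * Real.sqrt (A ^ 2 + A ^ 2)) :=
          Finset.sum_le_card_nsmul _ _ _ bound0
      _ = (S0.card : ℝ) * _ := nsmul_eq_mul _ _
      _ ≤ _ := mul_le_mul_of_nonneg_right (by exact_mod_cast card0) c0nn
  have h1 : S1.sum F ≤ ((Fintype.card V1 : ℝ) * (edgeCount G2 : ℝ)) *
      ((B + B) * Real.sqrt (B ^ 2 + B ^ 2)) := by
    calc S1.sum F ≤ S1.card • ((B + B) * Real.sqrt (B ^ 2 + B ^ 2)) :=
          Finset.sum_le_card_nsmul _ _ _ bound1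
      _ = (S1.card : ℝ) * _ := nsmul_eq_mul _ _
      _ ≤ _ := mul_le_mul_of_nonneg_right (by exact_mod_cast card1) c1nn
  have h2 : S2.sum F ≤ ((Fintype.card V1 : ℝ) * (Fintype.card V2 : ℝ)) *
      ((A + B) * Real.sqrt (A ^ 2 + B ^ 2)) := by
    calc S2.sum F ≤ S2.card • ((A + B) * Real.sqrt (A ^ 2 + B ^ 2)) :=
          Finset.sum_le_card_nsmul _ _ _ bound2
      _ = (S2.card : ℝ) * _ := nsmul_eq_mul _ _
      _ ≤ _ := mul_le_mul_of_nonneg_right (by exact_mod_cast card2) c2nn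
  have e0 : (A + A) * Real.sqrt (A ^ 2 + A ^ 2) = 2 * Real.sqrt 2 * A ^ 2 :=
    sqrt_two_sq A hA0
  have e1 : (B + B) * Real.sqrt (B ^ 2 + B ^ 2) = 2 * Real.sqrt 2 * B ^ 2 :=
    sqrt_two_sq B hB0
  rw [hESO, hsplit]
  have hABeq : (G1.maxDegree : ℝ) + Fintype.card V2 + (G2.maxDegree : ℝ) + 1 = A + B := by
    rw [hAdef, hBdef]; ring
  rw [hABeq]
  rw [e0] at h0
  rw [e1] at h1
  nlinarith [h0, h1, h2]
end

section
/- Let G₁ and G₂ be finite simple graphs of orders n₁, n₂ and sizes m₁, m₂ with minimum degrees δ₁, δ₂. Then ESO(G₁ ∘ G₂) ≥ 2√2·m₁·(δ₁+n₂)² + 2√2·n₁·m₂·(δ₂+1)² + n₁n₂·(δ₁+n₂+δ₂+1)·√((δ₁+n₂)² + (δ₂+1)²). -/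
open Finset SimpleGraph
open scoped Classical

section Aux

lemma sqrt_term_mono {a b x y : ℝ} (ha : 0 ≤ a) (hb : 0 ≤ b) (hx : a ≤ x) (hy : b ≤ y) :
    (a + b) * Real.sqrt (a ^ 2 + b ^ 2) ≤ (x + y) * Real.sqrt (x ^ 2 + y ^ 2) := by
  apply mul_le_mul (by linarith) (Real.sqrt_le_sqrt (by nlinarith)) (Real.sqrt_nonneg _)
    (by linarith)

lemma sqrt_term_diag {c : ℝ} (hc : 0 ≤ c) :
    (c + c) * Real.sqrt (c ^ 2 + c ^ 2) = 2 * Real.sqrt 2 * c ^ 2 := by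
  rw [show c ^ 2 + c ^ 2 = 2 * c ^ 2 by ring, Real.sqrt_mul (by norm_num : (0:ℝ) ≤ 2),
    Real.sqrt_sq hc]
  ring

lemma diag_le {c x y : ℝ} (hc : 0 ≤ c) (hx : c ≤ x) (hy : c ≤ y) :
    2 * Real.sqrt 2 * c ^ 2 ≤ (x + y) * Real.sqrt (x ^ 2 + y ^ 2) :=
  (sqrt_term_diag hc) ▸ sqrt_term_mono hc hc hx hy

variable {V1 V2 : Type*} [Fintype V1] [Fintype V2] (G1 : SimpleGraph V1) (G2 : SimpleGraph V2)

@[simp] lemma corona_adj_ll {a b : V1} :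
    (corona G1 G2).Adj (Sum.inl a) (Sum.inl b) ↔ G1.Adj a b := Iff.rfl
@[simp] lemma corona_adj_rr {p q : V1 × V2} :
    (corona G1 G2).Adj (Sum.inr p) (Sum.inr q) ↔ p.1 = q.1 ∧ G2.Adj p.2 q.2 := Iff.rfl
@[simp] lemma corona_adj_lr {a : V1} {p : V1 × V2} :
    (corona G1 G2).Adj (Sum.inl a) (Sum.inr p) ↔ a = p.1 := Iff.rfl
@[simp] lemma corona_adj_rl {a : V1} {p : V1 × V2} :
    (corona G1 G2).Adj (Sum.inr p) (Sum.inl a) ↔ a = p.1 := Iff.rfl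

lemma corona_deg_inl (a : V1) :
    (corona G1 G2).degree (Sum.inl a) = G1.degree a + Fintype.card V2 := by
  classical
  have h : (corona G1 G2).neighborFinset (Sum.inl a)
      = (G1.neighborFinset a).map ⟨Sum.inl, Sum.inl_injective⟩
        ∪ (univ : Finset V2).map ⟨fun v => Sum.inr (a, v), by intro x y h; simpa using h⟩ := by
    ext x
    obtain (b | p) := x <;>
      simp [SimpleGraph.mem_neighborFinset, Prod.ext_iff, eq_comm]
    exact ⟨fun h => ⟨p.2, by subst h; rfl⟩, fun ⟨v, hv⟩ => by cases hv; rfl⟩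
  have hd : Disjoint ((G1.neighborFinset a).map ⟨Sum.inl, Sum.inl_injective⟩)
      ((univ : Finset V2).map ⟨fun v => Sum.inr (a, v), by intro x y h; simpa using h⟩) := by
    simp [Finset.disjoint_left]
  rw [SimpleGraph.degree, h, Finset.card_union_of_disjoint hd, Finset.card_map, Finset.card_map,
    Finset.card_univ]
  rfl

lemma corona_deg_inr (p : V1 × V2) :
    (corona G1 G2).degree (Sum.inr p) = G2.degree p.2 + 1 := by
  classical
  have h : (corona G1 G2).neighborFinset (Sum.inr p)
      = (G2.neighborFinset p.2).map ⟨fun w => Sum.inr (p.1, w), by intro x y h; simpa using h⟩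
        ∪ {Sum.inl p.1} := by
    ext x
    obtain (b | q) := x <;>
      simp [SimpleGraph.mem_neighborFinset, Prod.ext_iff, eq_comm, and_comm] <;> aesop
    all_goals cases ‹Sum.inr _ = _›
    exacts [rfl, ‹_›]
  have hd : Disjoint ((G2.neighborFinset p.2).map
        ⟨fun w => Sum.inr (p.1, w), by intro x y h; simpa using h⟩)
      ({Sum.inl p.1} : Finset (V1 ⊕ V1 × V2)) := by
    simp [Finset.disjoint_left]
  rw [SimpleGraph.degree, h, Finset.card_union_of_disjoint hd, Finset.card_map,
    Finset.card_singleton]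
  rfl

end Aux

theorem eso_corona_lower {V1 V2 : Type*} [Fintype V1] [Fintype V2]
    (G1 : SimpleGraph V1) (G2 : SimpleGraph V2) :
    2 * Real.sqrt 2 * (edgeCount G1 : Real) * ((G1.minDegree : Real) + Fintype.card V2) ^ 2 +
      2 * Real.sqrt 2 * (Fintype.card V1 : Real) * (edgeCount G2 : Real) *
        ((G2.minDegree : Real) + 1) ^ 2 +
      (Fintype.card V1 : Real) * (Fintype.card V2 : Real) *
        ((G1.minDegree : Real) + Fintype.card V2 + (G2.minDegree : Real) + 1) *
        Real.sqrt (((G1.minDegree : Real) + Fintype.card V2) ^ 2 +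
          ((G2.minDegree : Real) + 1) ^ 2) ≤ ESO (corona G1 G2) := by
  classical
  set H := corona G1 G2 with hH
  set F : Sym2 (V1 ⊕ V1 × V2) → ℝ := fun e =>
    Sym2.lift ⟨fun u v => ((H.degree u : Real) + (H.degree v : Real)) *
        Real.sqrt ((H.degree u : Real) ^ 2 + (H.degree v : Real) ^ 2),
      fun u v => by
        dsimp only; rw [add_comm (H.degree u : Real), add_comm ((H.degree u : Real) ^ 2)]⟩ e
    with hF
  have hESO : ESO H = ∑ e ∈ H.edgeSet.toFinset, F e := rfl
  set c1 : ℝ := (G1.minDegree : ℝ) + Fintype.card V2 with hc1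
  set c2 : ℝ := (G2.minDegree : ℝ) + 1 with hc2
  have hc1n : 0 ≤ c1 := by positivity
  have hc2n : 0 ≤ c2 := by positivity
  set E1 := G1.edgeSet.toFinset with hE1
  set E2 := G2.edgeSet.toFinset with hE2
  have memE1 : ∀ u w : V1, s(u, w) ∈ E1 ↔ G1.Adj u w := fun u w => by
    rw [hE1, Set.mem_toFinset, SimpleGraph.mem_edgeSet]
  have memE2 : ∀ u w : V2, s(u, w) ∈ E2 ↔ G2.Adj u w := fun u w => by
    rw [hE2, Set.mem_toFinset, SimpleGraph.mem_edgeSet]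
  set A := E1.image (Sym2.map (Sum.inl : V1 → V1 ⊕ V1 × V2)) with hA
  set gB : V1 × Sym2 V2 → Sym2 (V1 ⊕ V1 × V2) :=
    fun ae => Sym2.map (fun v => Sum.inr (ae.1, v)) ae.2 with hgB
  set B := ((univ : Finset V1) ×ˢ E2).image gB with hB
  set C := (univ : Finset (V1 × V2)).image
    (fun p : V1 × V2 => s(Sum.inl p.1, Sum.inr p)) with hC
  -- partition of the edge set
  have hpart : H.edgeSet.toFinset = (A ∪ B) ∪ C := by
    ext e
    induction e using Sym2.ind with
    | _ x y =>
      simp only [Set.mem_toFinset, SimpleGraph.mem_edgeSet, Finset.mem_union, hA, hB, hC,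
        Finset.mem_image, Finset.mem_product, Finset.mem_univ, true_and, Prod.exists]
      constructor
      · rintro h
        obtain (a | p) := x <;> obtain (b | q) := y
        · exact Or.inl (Or.inl ⟨s(a, b), (memE1 a b).2 h,
            by rw [Sym2.map_pair_eq]⟩)
        · refine Or.inr ⟨q.1, q.2, ?_⟩
          have : a = q.1 := h
          subst this
          rfl
        · refine Or.inr ⟨p.1, p.2, ?_⟩
          have : b = p.1 := h
          subst this
          rw [Sym2.eq_swap]
        · refine Or.inl (Or.inr ⟨p.1, s(p.2, q.2), (memE2 p.2 q.2).2 h.2, ?_⟩)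
          simp only [hgB, Sym2.map_pair_eq]
          obtain ⟨q1, q2⟩ := q
          obtain ⟨rfl, -⟩ := h
          rfl
      · rintro ((⟨e', he', heq⟩ | ⟨a, e', he', heq⟩) | ⟨a, v, heq⟩)
        · revert heq
          induction e' using Sym2.ind with
          | _ u w =>
            intro heq
            rw [Sym2.map_pair_eq, Sym2.eq_iff] at heq
            have hadj : G1.Adj u w := (memE1 u w).1 he'
            rcases heq with ⟨rfl, rfl⟩ | ⟨rfl, rfl⟩
            · exact hadj
            · exact hadj.symm
        · revert heq
          induction e' using Sym2.ind with
          | _ u w =>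
            intro heq
            simp only [hgB, Sym2.map_pair_eq, Sym2.eq_iff] at heq
            have hadj : G2.Adj u w := (memE2 u w).1 he'
            rcases heq with ⟨rfl, rfl⟩ | ⟨rfl, rfl⟩
            · exact ⟨rfl, hadj⟩
            · exact ⟨rfl, hadj.symm⟩
        · rw [Sym2.eq_iff] at heq
          rcases heq with ⟨rfl, rfl⟩ | ⟨rfl, rfl⟩
          · rfl
          · rfl
  -- disjointness
  have hAB : Disjoint A B := by
    rw [Finset.disjoint_left]
    rintro e heA heB
    simp only [hA, hB, Finset.mem_image, Finset.mem_product] at heA heB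
    obtain ⟨e1, -, rfl⟩ := heA
    obtain ⟨⟨a, e2⟩, -, heq⟩ := heB
    revert heq
    induction e1 using Sym2.ind with
    | _ u w =>
      induction e2 using Sym2.ind with
      | _ x y =>
        intro heq
        simp only [hgB, Sym2.map_pair_eq, Sym2.eq_iff] at heq
        rcases heq with ⟨h, -⟩ | ⟨h, -⟩ <;> exact absurd h (by simp)
  have hABC : Disjoint (A ∪ B) C := by
    rw [Finset.disjoint_left]
    rintro e heAB heC
    simp only [hC, Finset.mem_image, Finset.mem_univ, true_and] at heC
    obtain ⟨p, rfl⟩ := heC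
    rcases Finset.mem_union.1 heAB with ha | hb
    · simp only [hA, Finset.mem_image] at ha
      obtain ⟨e1, -, heq⟩ := ha
      revert heq
      induction e1 using Sym2.ind with
      | _ u w =>
        intro heq
        rw [Sym2.map_pair_eq, Sym2.eq_iff] at heq
        rcases heq with ⟨-, h⟩ | ⟨h, -⟩ <;> exact absurd h (by simp)
    · simp only [hB, Finset.mem_image, Finset.mem_product] at hb
      obtain ⟨⟨a, e2⟩, -, heq⟩ := hb
      revert heq
      induction e2 using Sym2.ind with
      | _ x y =>
        intro heq
        simp only [hgB, Sym2.map_pair_eq, Sym2.eq_iff] at heq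
        rcases heq with ⟨h, -⟩ | ⟨-, h⟩ <;> exact absurd h (by simp)
  -- pointwise bounds
  have hd1 : ∀ u : V1, c1 ≤ ((H.degree (Sum.inl u) : ℕ) : ℝ) := by
    intro u
    rw [corona_deg_inl]
    push_cast
    have := G1.minDegree_le_degree u
    simp only [hc1]
    gcongr
    all_goals exact_mod_cast this
  have hd2 : ∀ p : V1 × V2, c2 ≤ ((H.degree (Sum.inr p) : ℕ) : ℝ) := by
    intro p
    rw [corona_deg_inr]
    push_cast
    have := G2.minDegree_le_degree p.2
    simp only [hc2]
    gcongr
    all_goals exact_mod_cast this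
  have h1 : ∀ e : Sym2 V1, 2 * Real.sqrt 2 * c1 ^ 2 ≤ F (Sym2.map Sum.inl e) := by
    intro e
    induction e using Sym2.ind with
    | _ u w =>
      rw [Sym2.map_pair_eq]
      simp only [hF, Sym2.lift_mk]
      exact diag_le hc1n (hd1 u) (hd1 w)
  have h2 : ∀ (a : V1) (e : Sym2 V2), 2 * Real.sqrt 2 * c2 ^ 2 ≤ F (gB (a, e)) := by
    intro a e
    induction e using Sym2.ind with
    | _ u w =>
      simp only [hgB, Sym2.map_pair_eq, hF, Sym2.lift_mk]
      exact diag_le hc2n (hd2 (a, u)) (hd2 (a, w))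
  have h3 : ∀ p : V1 × V2, (c1 + c2) * Real.sqrt (c1 ^ 2 + c2 ^ 2) ≤
      F s(Sum.inl p.1, Sum.inr p) := by
    intro p
    simp only [hF, Sym2.lift_mk]
    exact sqrt_term_mono hc1n hc2n (hd1 p.1) (hd2 p)
  -- injectivity for sum_image
  have hinjA : ∀ x ∈ E1, ∀ y ∈ E1, Sym2.map Sum.inl x = Sym2.map Sum.inl y → x = y :=
    fun x _ y _ h => Sym2.map.injective (f := (Sum.inl : V1 → V1 ⊕ V1 × V2)) Sum.inl_injective h
  have hinjB : ∀ x ∈ (univ : Finset V1) ×ˢ E2, ∀ y ∈ (univ : Finset V1) ×ˢ E2,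
      gB x = gB y → x = y := by
    rintro ⟨a, e⟩ - ⟨b, e'⟩ - h
    revert h
    induction e using Sym2.ind with
    | _ x y =>
      induction e' using Sym2.ind with
      | _ x' y' =>
        intro h
        simp only [hgB, Sym2.map_pair_eq, Sym2.eq_iff, Sum.inr.injEq, Prod.mk.injEq] at h
        rcases h with ⟨⟨rfl, rfl⟩, -, rfl⟩ | ⟨⟨rfl, rfl⟩, -, rfl⟩
        · rfl
        · rw [Prod.mk.injEq, Sym2.eq_iff]
          exact ⟨rfl, Or.inr ⟨rfl, rfl⟩⟩
  have hinjC : ∀ x ∈ (univ : Finset (V1 × V2)), ∀ y ∈ (univ : Finset (V1 × V2)),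
      s(Sum.inl x.1, Sum.inr x) = s(Sum.inl y.1, Sum.inr y) → x = y := by
    rintro p - q - h
    rw [Sym2.eq_iff] at h
    rcases h with ⟨-, h⟩ | ⟨h, -⟩
    · exact Sum.inr.inj h
    · exact absurd h (by simp)
  -- sums
  have hSA : (E1.card : ℝ) * (2 * Real.sqrt 2 * c1 ^ 2) ≤ ∑ e ∈ A, F e := by
    rw [hA, Finset.sum_image hinjA]
    have := Finset.card_nsmul_le_sum E1 (fun e => F (Sym2.map Sum.inl e))
      (2 * Real.sqrt 2 * c1 ^ 2) (fun e _ => h1 e)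
    simpa [nsmul_eq_mul] using this
  have hSB : ((Fintype.card V1 * E2.card : ℕ) : ℝ) * (2 * Real.sqrt 2 * c2 ^ 2) ≤
      ∑ e ∈ B, F e := by
    rw [hB, Finset.sum_image hinjB]
    have := Finset.card_nsmul_le_sum ((univ : Finset V1) ×ˢ E2) (fun ae => F (gB ae))
      (2 * Real.sqrt 2 * c2 ^ 2) (fun ae _ => h2 ae.1 ae.2)
    simpa [nsmul_eq_mul, Finset.card_product] using this
  have hSC : ((Fintype.card V1 * Fintype.card V2 : ℕ) : ℝ) *
      ((c1 + c2) * Real.sqrt (c1 ^ 2 + c2 ^ 2)) ≤ ∑ e ∈ C, F e := by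
    rw [hC, Finset.sum_image hinjC]
    have := Finset.card_nsmul_le_sum (univ : Finset (V1 × V2))
      (fun p => F s(Sum.inl p.1, Sum.inr p))
      ((c1 + c2) * Real.sqrt (c1 ^ 2 + c2 ^ 2)) (fun p _ => h3 p)
    simpa [nsmul_eq_mul, Finset.card_univ, Fintype.card_prod] using this
  have hsplit : ESO H = (∑ e ∈ A, F e + ∑ e ∈ B, F e) + ∑ e ∈ C, F e := by
    rw [hESO, hpart, Finset.sum_union hABC, Finset.sum_union hAB]
  rw [hsplit]
  have hm1 : (edgeCount G1 : ℝ) = (E1.card : ℝ) := rfl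
  have hm2 : (edgeCount G2 : ℝ) = (E2.card : ℝ) := rfl
  push_cast at hSB hSC ⊢
  rw [hm1, hm2]
  calc 2 * Real.sqrt 2 * (E1.card : ℝ) * c1 ^ 2 +
        2 * Real.sqrt 2 * (Fintype.card V1 : ℝ) * (E2.card : ℝ) * c2 ^ 2 +
        (Fintype.card V1 : ℝ) * (Fintype.card V2 : ℝ) *
          ((G1.minDegree : ℝ) + Fintype.card V2 + (G2.minDegree : ℝ) + 1) *
          Real.sqrt (c1 ^ 2 + c2 ^ 2)
      = (E1.card : ℝ) * (2 * Real.sqrt 2 * c1 ^ 2) +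
        ((Fintype.card V1 : ℝ) * (E2.card : ℝ)) * (2 * Real.sqrt 2 * c2 ^ 2) +
        ((Fintype.card V1 : ℝ) * (Fintype.card V2 : ℝ)) *
          ((c1 + c2) * Real.sqrt (c1 ^ 2 + c2 ^ 2)) := by
        rw [hc1, hc2]; ring
    _ ≤ _ := by
        refine add_le_add (add_le_add hSA hSB) hSC
end
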